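/- For each n, let Σ_n be a symmetric positive definite d(n)×d(n) matrix whose eigenvalues are bounded away from zero and from above uniformly in n, and let Σ̂_n be a symmetric positive semidefinite random d(n)×d(n) matrix with ‖Σ̂_n − Σ_n‖₂ = O_P(a_n) for some sequence a_n → 0, where ‖·‖₂ is the spectral norm. Then ‖Σ̂_n^{-1/2} − Σ_n^{-1/2}‖₂ = O_P(a_n), where M^{-1/2} denotes the Moore–Penrose inverse of the positive semidefinite square root of M. Equivalently: for every δ > 0 there is M > 0 such that limsup_n P(Σ̂_n is singular, or ‖Σ̂_n^{-1/2} − Σ_n^{-1/2}‖₂ > M a_n) ≤ δ. -/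

import Mathlib

open MeasureTheory ProbabilityTheory Filter Real Matrix
open scoped ENNReal NNReal BigOperators

noncomputable section

/-- The Moore–Penrose pseudoinverse of a real square matrix, characterized by the four
Penrose conditions (which determine it uniquely whenever a solution exists, and a solution
always exists for real matrices). -/
def moorePenrose {m : ℕ} (A : Matrix (Fin m) (Fin m) ℝ) : Matrix (Fin m) (Fin m) ℝ :=
  by classical exact
  if h : ∃ B : Matrix (Fin m) (Fin m) ℝ,
      A * B * A = A ∧ B * A * B = B ∧ (A * B)ᵀ = A * B ∧ (B * A)ᵀ = B * A
  then h.choose else 0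

/-- The positive semidefinite square root of a positive semidefinite matrix
(junk value `0` if the matrix is not psd). -/
def psdSqrt {m : ℕ} (A : Matrix (Fin m) (Fin m) ℝ) : Matrix (Fin m) (Fin m) ℝ :=
  by classical exact if h : A.PosSemidef then ((h.1.eigenvectorUnitary : Matrix (Fin m) (Fin m) ℝ) * Matrix.diagonal (fun i => Real.sqrt (h.1.eigenvalues i)) * (star h.1.eigenvectorUnitary : Matrix (Fin m) (Fin m) ℝ)) else 0

/-- `A^{-1/2}`: the Moore–Penrose inverse of the positive semidefinite square root of `A`. -/
def invSqrt {m : ℕ} (A : Matrix (Fin m) (Fin m) ℝ) : Matrix (Fin m) (Fin m) ℝ :=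
  moorePenrose (psdSqrt A)

/-- The `p`-norm on `ℝ^m` (for finite `p`). -/
def pNorm {m : ℕ} (p : ℝ) (x : Fin m → ℝ) : ℝ :=
  (∑ i, |x i| ^ p) ^ (1 / p)

/-- The spectral norm of a real matrix. -/
def specNorm {m : ℕ} (A : Matrix (Fin m) (Fin m) ℝ) : ℝ :=
  sSup ((fun x => Real.sqrt (∑ i, (A.mulVec x i) ^ 2)) '' {x | ∑ i, (x i) ^ 2 ≤ 1})

/-- The standard normal cumulative distribution function `Φ`. -/
def Phi (t : ℝ) : ℝ := (gaussianReal 0 1 (Set.Iic t)).toReal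

/-- `λ_p(x) = E|Z + x|^p` for `Z` standard normal. -/
def lamP (p x : ℝ) : ℝ := ∫ z, |z + x| ^ p ∂(gaussianReal 0 1)

/-- `σ_p = sqrt(Var(|Z|^p)) = sqrt(E|Z|^{2p} - (E|Z|^p)²)`. -/
def sigmaP (p : ℝ) : ℝ := Real.sqrt (lamP (2 * p) 0 - (lamP p 0) ^ 2)

/-- `g_p(x) = max(x², |x|^p)`. -/
def gP (p x : ℝ) : ℝ := max (x ^ 2) (|x| ^ p)

/-- The standard Gaussian measure `N(0, I_m)` on `ℝ^m`. -/
def stdGaussianPi (m : ℕ) : Measure (Fin m → ℝ) :=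
  Measure.pi fun _ => gaussianReal 0 1

/-- Convergence in distribution to the standard normal law, expressed via pointwise
convergence of the cumulative distribution functions (the limit cdf being continuous,
this is equivalent to weak convergence). -/
def TendstoStdNormal {Ω : Type*} [MeasurableSpace Ω] (P : Measure Ω) (X : ℕ → Ω → ℝ) : Prop :=
  ∀ t : ℝ, Tendsto (fun n => (P {ω | X n ω ≤ t}).toReal) atTop (nhds (Phi t))

/-- `X_n = O_P(a_n)`: for every `δ > 0` there is `M > 0` with
`limsup_n P(|X_n| > M a_n) ≤ δ`. -/
def IsBigOP {Ω : Type*} [MeasurableSpace Ω] (P : Measure Ω) (X : ℕ → Ω → ℝ) (a : ℕ → ℝ) : Prop :=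
  ∀ δ : ℝ, 0 < δ → ∃ M : ℝ, 0 < M ∧
    Filter.limsup (fun n => (P {ω | M * a n < |X n ω|}).toReal) Filter.atTop ≤ δ

section Setup

variable {Ω : Type*} [MeasurableSpace Ω]

/-- The scaled empirical moment vector `H_n = n^{-1/2} ∑_{i=1}^n Y_{i,n}`. -/
def Hstat {d : ℕ → ℕ} (Y : (n : ℕ) → Fin n → Ω → (Fin (d n) → ℝ)) (n : ℕ) (ω : Ω) :
    Fin (d n) → ℝ :=
  (Real.sqrt n)⁻¹ • ∑ i : Fin n, Y n i ω

/-- The noncentrality vector `θ_n = √n · Σ_n^{-1/2} μ_n`. -/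
def theta {d : ℕ → ℕ} (μ : (n : ℕ) → Fin (d n) → ℝ)
    (SigM : (n : ℕ) → Matrix (Fin (d n)) (Fin (d n)) ℝ) (n : ℕ) : Fin (d n) → ℝ :=
  Real.sqrt n • (invSqrt (SigM n)).mulVec (μ n)

/-- The normalized statistic vector `Σ̂_n^{-1/2} H_n`. -/
def Vstat {d : ℕ → ℕ} (Y : (n : ℕ) → Fin n → Ω → (Fin (d n) → ℝ))
    (SigH : (n : ℕ) → Ω → Matrix (Fin (d n)) (Fin (d n)) ℝ) (n : ℕ) (ω : Ω) :
    Fin (d n) → ℝ :=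
  (invSqrt (SigH n ω)).mulVec (Hstat Y n ω)

/-- The test statistic `S_{n,p} = ‖Σ̂_n^{-1/2} H_n‖_p` for finite `p`. -/
def Sstat {d : ℕ → ℕ} (Y : (n : ℕ) → Fin n → Ω → (Fin (d n) → ℝ))
    (SigH : (n : ℕ) → Ω → Matrix (Fin (d n)) (Fin (d n)) ℝ) (p : ℝ) (n : ℕ) (ω : Ω) : ℝ :=
  pNorm p (Vstat Y SigH n ω)

/-- The test statistic `S_{n,∞} = ‖Σ̂_n^{-1/2} H_n‖_∞` (the norm on the Pi type
`Fin (d n) → ℝ` is the supremum norm). -/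
def SstatInf {d : ℕ → ℕ} (Y : (n : ℕ) → Fin n → Ω → (Fin (d n) → ℝ))
    (SigH : (n : ℕ) → Ω → Matrix (Fin (d n)) (Fin (d n)) ℝ) (n : ℕ) (ω : Ω) : ℝ :=
  ‖Vstat Y SigH n ω‖

/-- Basic setup: the `Y_{i,n}` are identically distributed with mean vector `μ_n`, `Σ_n`
is the (positive definite) covariance matrix of `H_n` (whose mean is `√n μ_n`), and the
estimator `Σ̂_n` is symmetric positive semidefinite. -/
def BaseSetup (P : Measure Ω) (d : ℕ → ℕ)
    (Y : (n : ℕ) → Fin n → Ω → (Fin (d n) → ℝ))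
    (μ : (n : ℕ) → Fin (d n) → ℝ)
    (SigM : (n : ℕ) → Matrix (Fin (d n)) (Fin (d n)) ℝ)
    (SigH : (n : ℕ) → Ω → Matrix (Fin (d n)) (Fin (d n)) ℝ) : Prop :=
  (∀ n (i j : Fin n), IdentDistrib (Y n i) (Y n j) P P) ∧
  (∀ n (i : Fin n) (j : Fin (d n)), ∫ ω, Y n i ω j ∂P = μ n j) ∧
  (∀ n, (SigM n).PosDef) ∧
  (∀ n (j k : Fin (d n)), SigM n j k =
      ∫ ω, (Hstat Y n ω j - Real.sqrt n * μ n j) * (Hstat Y n ω k - Real.sqrt n * μ n k) ∂P) ∧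
  (∀ n ω, (SigH n ω).PosSemidef)

/-- Assumption C: `d(n) → ∞`; the eigenvalues of `Σ_n` are bounded away from zero and
from above uniformly in `n`; `‖Σ̂_n − Σ_n‖₂ = O_P(a_n)` (spectral norm) with
`d^{3/4} a_n → 0`; and a Gaussian approximation for `Σ_n^{-1/2} H_n` holds uniformly
over convex Borel sets. -/
def AssumptionC (P : Measure Ω) (d : ℕ → ℕ)
    (Y : (n : ℕ) → Fin n → Ω → (Fin (d n) → ℝ))
    (μ : (n : ℕ) → Fin (d n) → ℝ)
    (SigM : (n : ℕ) → Matrix (Fin (d n)) (Fin (d n)) ℝ)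
    (SigH : (n : ℕ) → Ω → Matrix (Fin (d n)) (Fin (d n)) ℝ) : Prop :=
  Tendsto d atTop atTop ∧
  (∃ c₁ c₂ : ℝ, 0 < c₁ ∧ ∀ n (x : Fin (d n) → ℝ),
      c₁ * (∑ i, (x i) ^ 2) ≤ dotProduct x ((SigM n).mulVec x) ∧
      dotProduct x ((SigM n).mulVec x) ≤ c₂ * (∑ i, (x i) ^ 2)) ∧
  (∃ a : ℕ → ℝ, (∀ n, 0 < a n) ∧
      Tendsto (fun n => (d n : ℝ) ^ ((3 : ℝ) / 4) * a n) atTop (nhds 0) ∧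
      IsBigOP P (fun n ω => specNorm (SigH n ω - SigM n)) a) ∧
  (∀ ε : ℝ, 0 < ε → ∃ N : ℕ, ∀ n ≥ N, ∀ C : Set (Fin (d n) → ℝ),
      Convex ℝ C → MeasurableSet C →
      |(P {ω | (invSqrt (SigM n)).mulVec (Hstat Y n ω) ∈ C}).toReal -
        (stdGaussianPi (d n) {z | z + theta μ SigM n ∈ C}).toReal| ≤ ε)

/-- Part (i) of Assumption P (for exponent `p`): along every subsequence `n'` for which
`(1/√d')·∑ᵢ [λ_p(θ_{i,n'}) − λ_p(0)]` is bounded,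
`(S_{n',p}^p − ∑ᵢ λ_p(θ_{i,n'}))/(√d'·σ_p)` converges in distribution to `N(0,1)`. -/
def AssumpP1 (P : Measure Ω) (d : ℕ → ℕ)
    (Y : (n : ℕ) → Fin n → Ω → (Fin (d n) → ℝ))
    (μ : (n : ℕ) → Fin (d n) → ℝ)
    (SigM : (n : ℕ) → Matrix (Fin (d n)) (Fin (d n)) ℝ)
    (SigH : (n : ℕ) → Ω → Matrix (Fin (d n)) (Fin (d n)) ℝ) (p : ℝ) : Prop :=
  ∀ φ : ℕ → ℕ, StrictMono φ →
    (∃ B : ℝ, ∀ k,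
        |(Real.sqrt (d (φ k)))⁻¹ *
          ∑ i, (lamP p (theta μ SigM (φ k) i) - lamP p 0)| ≤ B) →
    TendstoStdNormal P (fun k ω =>
      (Sstat Y SigH p (φ k) ω ^ p - ∑ i, lamP p (theta μ SigM (φ k) i)) /
        (Real.sqrt (d (φ k)) * sigmaP p))

/-- Part (ii) of Assumption P (for exponent `p`): if
`(1/√d)·∑ᵢ [λ_p(θ_{i,n}) − λ_p(0)] → ∞`, then
`(S_{n,p}^p − ∑ᵢ λ_p(θ_{i,n}))/(∑ᵢ [λ_p(θ_{i,n}) − λ_p(0)]) → 0` in probability. -/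
def AssumpP2 (P : Measure Ω) (d : ℕ → ℕ)
    (Y : (n : ℕ) → Fin n → Ω → (Fin (d n) → ℝ))
    (μ : (n : ℕ) → Fin (d n) → ℝ)
    (SigM : (n : ℕ) → Matrix (Fin (d n)) (Fin (d n)) ℝ)
    (SigH : (n : ℕ) → Ω → Matrix (Fin (d n)) (Fin (d n)) ℝ) (p : ℝ) : Prop :=
  Tendsto (fun n => (Real.sqrt (d n))⁻¹ *
      ∑ i, (lamP p (theta μ SigM n i) - lamP p 0)) atTop atTop →
    ∀ ε : ℝ, 0 < ε →
      Tendsto (fun n => (P {ω |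
        ε < |(Sstat Y SigH p n ω ^ p - ∑ i, lamP p (theta μ SigM n i)) /
          (∑ i, (lamP p (theta μ SigM n i) - lamP p 0))|}).toReal) atTop (nhds 0)

end Setup

/-- A critical value sequence `κ_n` is size-`α` calibrated for finite exponent `p` if
`(κ_n^p − d·λ_p(0))/(√d·σ_p) → Φ^{-1}(1−α)`. -/
def CalibratedP (d : ℕ → ℕ) (p α : ℝ) (κ : ℕ → ℝ) : Prop :=
  ∃ q : ℝ, Phi q = 1 - α ∧
    Tendsto (fun n => (κ n ^ p - (d n : ℝ) * lamP p 0) / (Real.sqrt (d n) * sigmaP p))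
      atTop (nhds q)

/-- A critical value sequence `κ_n` is size-`α` calibrated for exponent `∞` if eventually
`κ_n = √(2 log d) − (log log d + log(4π))/(2√(2 log d)) − (log(−log(1−α)/2) + o(1))/√(2 log d)`. -/
def CalibratedInf (d : ℕ → ℕ) (α : ℝ) (κ : ℕ → ℝ) : Prop :=
  ∃ e : ℕ → ℝ, Tendsto e atTop (nhds 0) ∧
    ∀ᶠ n in atTop, κ n =
      Real.sqrt (2 * Real.log (d n)) -
        (Real.log (Real.log (d n)) + Real.log (4 * π)) /
          (2 * Real.sqrt (2 * Real.log (d n))) -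
        (Real.log (-Real.log (1 - α) / 2) + e n) / Real.sqrt (2 * Real.log (d n))

/-- The constant `𝔠_d = √(2 log d) − log log d / (2 √(2 log d))` for `d ≥ 2`, and `0` otherwise. -/
def cFrak (m : ℕ) : ℝ :=
  if 2 ≤ m then
    Real.sqrt (2 * Real.log m) - Real.log (Real.log m) / (2 * Real.sqrt (2 * Real.log m))
  else 0

/-- `max_{p ∈ 𝔓_n} κ_{n,p}^{-1} ‖z‖_p`, where `𝔓_n = {2, p_1, …, p_{m_n}, ∞}`. -/
def psiMaxVal (κ2 κinf : ℝ) (pseq : ℕ → ℝ) (mn : ℕ) (κI : ℕ → ℝ) {k : ℕ}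
    (z : Fin k → ℝ) : ℝ :=
  max (κ2⁻¹ * pNorm 2 z)
    (max (κinf⁻¹ * ‖z‖) (⨆ j : Fin mn, (κI j)⁻¹ * pNorm (pseq j) z))

namespace Matrix.PosSemidef

def sqrt {m : ℕ} {A : Matrix (Fin m) (Fin m) ℝ} (h : A.PosSemidef) : Matrix (Fin m) (Fin m) ℝ :=
  (h.1.eigenvectorUnitary : Matrix (Fin m) (Fin m) ℝ) * Matrix.diagonal (fun i => Real.sqrt (h.1.eigenvalues i)) * (star h.1.eigenvectorUnitary : Matrix (Fin m) (Fin m) ℝ)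

lemma posSemidef_sqrt {m : ℕ} {A : Matrix (Fin m) (Fin m) ℝ} (h : A.PosSemidef) :
    h.sqrt.PosSemidef := by
  have := (Matrix.posSemidef_diagonal_iff.2 (fun i => Real.sqrt_nonneg (h.1.eigenvalues i))).mul_mul_conjTranspose_same
    (h.1.eigenvectorUnitary : Matrix (Fin m) (Fin m) ℝ)
  unfold sqrt
  rw [Matrix.star_eq_conjTranspose]
  exact this

lemma sqrt_mul_self {m : ℕ} {A : Matrix (Fin m) (Fin m) ℝ} (h : A.PosSemidef) :
    h.sqrt * h.sqrt = A := by
  have hU := Unitary.coe_star_mul_self h.1.eigenvectorUnitary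
  have hD : Matrix.diagonal (fun i => Real.sqrt (h.1.eigenvalues i)) *
      Matrix.diagonal (fun i => Real.sqrt (h.1.eigenvalues i))
      = Matrix.diagonal (RCLike.ofReal ∘ h.1.eigenvalues) := by
    rw [Matrix.diagonal_mul_diagonal]
    congr 1
    funext i
    simp [Real.mul_self_sqrt (h.eigenvalues_nonneg i)]
  conv_rhs => rw [h.1.spectral_theorem, Unitary.conjStarAlgAut_apply]
  unfold sqrt
  rw [← hD]
  calc _ = (h.1.eigenvectorUnitary : Matrix (Fin m) (Fin m) ℝ) *
        Matrix.diagonal (fun i => Real.sqrt (h.1.eigenvalues i)) *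
        ((star h.1.eigenvectorUnitary : Matrix (Fin m) (Fin m) ℝ) * (h.1.eigenvectorUnitary : Matrix (Fin m) (Fin m) ℝ)) *
        Matrix.diagonal (fun i => Real.sqrt (h.1.eigenvalues i)) *
        (star h.1.eigenvectorUnitary : Matrix (Fin m) (Fin m) ℝ) := by
          simp only [Matrix.mul_assoc]
    _ = _ := by rw [hU, Matrix.mul_one]; simp only [Matrix.mul_assoc]

end Matrix.PosSemidef

section SpecAuxLemmas
variable {m : ℕ}

lemma sq_sum_mulVec_le (A : Matrix (Fin m) (Fin m) ℝ) (x : Fin m → ℝ) :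
    ∑ i, (A.mulVec x i) ^ 2 ≤ (∑ i, ∑ j, (A i j)^2) * (∑ j, (x j)^2) := by
  rw [Finset.sum_mul]
  refine Finset.sum_le_sum fun i _ => ?_
  simpa [Matrix.mulVec, dotProduct] using
    Finset.sum_mul_sq_le_sq_mul_sq Finset.univ (fun j => A i j) x

lemma specNorm_bddAbove (A : Matrix (Fin m) (Fin m) ℝ) :
    BddAbove ((fun x => Real.sqrt (∑ i, (A.mulVec x i) ^ 2)) '' {x | ∑ i, (x i) ^ 2 ≤ 1}) := by
  refine ⟨Real.sqrt (∑ i, ∑ j, (A i j)^2), ?_⟩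
  rintro y ⟨x, hx, rfl⟩
  refine Real.sqrt_le_sqrt (((sq_sum_mulVec_le A x).trans ?_))
  calc (∑ i, ∑ j, (A i j)^2) * (∑ j, (x j)^2) ≤ (∑ i, ∑ j, (A i j)^2) * 1 :=
        mul_le_mul_of_nonneg_left hx (by positivity)
    _ = _ := mul_one _

lemma specNorm_nonneg (A : Matrix (Fin m) (Fin m) ℝ) : 0 ≤ specNorm A := by
  have h0 : (fun x => Real.sqrt (∑ i, (A.mulVec x i) ^ 2)) 0 ∈
      ((fun x => Real.sqrt (∑ i, (A.mulVec x i) ^ 2)) '' {x | ∑ i, (x i) ^ 2 ≤ 1}) :=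
    Set.mem_image_of_mem _ (by simp)
  have := le_csSup (specNorm_bddAbove A) h0
  simpa [Matrix.mulVec_zero, specNorm] using this

lemma specNorm_le {A : Matrix (Fin m) (Fin m) ℝ} {k : ℝ}
    (h : ∀ x : Fin m → ℝ, (∑ i, (x i)^2) ≤ 1 → Real.sqrt (∑ i, (A.mulVec x i) ^ 2) ≤ k) :
    specNorm A ≤ k := by
  refine csSup_le ⟨_, Set.mem_image_of_mem _ (show (0:Fin m → ℝ) ∈ _ by simp)⟩ ?_
  rintro y ⟨x, hx, rfl⟩
  exact h x hx

lemma sqrt_sum_sq_mulVec_le (A : Matrix (Fin m) (Fin m) ℝ) (x : Fin m → ℝ) :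
    Real.sqrt (∑ i, (A.mulVec x i) ^ 2) ≤ specNorm A * Real.sqrt (∑ i, (x i)^2) := by
  rcases eq_or_ne x 0 with rfl | hx
  · simp [Matrix.mulVec_zero]
  · have hq : 0 < ∑ i, (x i)^2 := by
      have : ∃ i, x i ≠ 0 := by
        by_contra h; push_neg at h; exact hx (funext h)
      obtain ⟨i, hi⟩ := this
      refine Finset.sum_pos' (fun j _ => sq_nonneg _) ⟨i, Finset.mem_univ i, by positivity⟩
    set t : ℝ := Real.sqrt (∑ i, (x i)^2) with ht
    have htpos : 0 < t := Real.sqrt_pos.2 hq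
    have hmem : (t⁻¹ • x) ∈ {x : Fin m → ℝ | ∑ i, (x i) ^ 2 ≤ 1} := by
      simp only [Set.mem_setOf_eq, Pi.smul_apply, smul_eq_mul, mul_pow]
      rw [← Finset.mul_sum]
      rw [ht]
      rw [inv_pow, Real.sq_sqrt hq.le]
      rw [inv_mul_cancel₀ hq.ne']
    have hle := le_csSup (specNorm_bddAbove A) (Set.mem_image_of_mem _ hmem)
    have hval : Real.sqrt (∑ i, (A.mulVec (t⁻¹ • x) i) ^ 2)
        = t⁻¹ * Real.sqrt (∑ i, (A.mulVec x i) ^ 2) := by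
      rw [Matrix.mulVec_smul]
      simp only [Pi.smul_apply, smul_eq_mul, mul_pow]
      rw [← Finset.mul_sum, Real.sqrt_mul (by positivity), Real.sqrt_sq_eq_abs, abs_of_pos (by positivity)]
    rw [hval] at hle
    calc Real.sqrt (∑ i, (A.mulVec x i) ^ 2)
        = t * (t⁻¹ * Real.sqrt (∑ i, (A.mulVec x i) ^ 2)) := by
          field_simp
      _ ≤ t * specNorm A := by
          exact mul_le_mul_of_nonneg_left hle htpos.le
      _ = specNorm A * t := mul_comm _ _

lemma specNorm_neg (A : Matrix (Fin m) (Fin m) ℝ) : specNorm (-A) = specNorm A := by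
  unfold specNorm
  congr 1
  ext y
  constructor <;> (rintro ⟨x, hx, rfl⟩; exact ⟨x, hx, by simp [Matrix.neg_mulVec]⟩)

lemma specNorm_mul_le (A B : Matrix (Fin m) (Fin m) ℝ) :
    specNorm (A * B) ≤ specNorm A * specNorm B := by
  refine specNorm_le fun x hx => ?_
  have h1 : (A * B).mulVec x = A.mulVec (B.mulVec x) := (Matrix.mulVec_mulVec _ _ _).symm
  rw [h1]
  calc Real.sqrt (∑ i, (A.mulVec (B.mulVec x) i) ^ 2)
      ≤ specNorm A * Real.sqrt (∑ i, (B.mulVec x i)^2) := sqrt_sum_sq_mulVec_le A _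
    _ ≤ specNorm A * (specNorm B * Real.sqrt (∑ i, (x i)^2)) :=
        mul_le_mul_of_nonneg_left (sqrt_sum_sq_mulVec_le B x) (specNorm_nonneg A)
    _ ≤ specNorm A * (specNorm B * 1) := by
        refine mul_le_mul_of_nonneg_left (mul_le_mul_of_nonneg_left ?_ (specNorm_nonneg B)) (specNorm_nonneg A)
        exact Real.sqrt_le_one.2 (by simpa using hx)
    _ = specNorm A * specNorm B := by ring

namespace SpecAux
variable {m : ℕ}

def eC : (Fin m → ℝ) → EuclideanSpace ℝ (Fin m) := (WithLp.equiv 2 _).symm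

lemma eC_apply (x : Fin m → ℝ) (i : Fin m) : (eC x) i = x i := rfl

lemma norm_eC (x : Fin m → ℝ) : ‖eC x‖ = Real.sqrt (∑ i, (x i)^2) := by
  rw [EuclideanSpace.norm_eq]
  congr 1
  refine Finset.sum_congr rfl fun i _ => ?_
  rw [eC_apply, Real.norm_eq_abs, sq_abs]

lemma inner_eC (x y : Fin m → ℝ) : (inner ℝ (eC x) (eC y) : ℝ) = ∑ i, x i * y i := by
  rw [PiLp.inner_apply]
  simp only [Real.inner_apply]; rfl

lemma herm_symm_sum {A : Matrix (Fin m) (Fin m) ℝ} (ha : A.IsHermitian)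
    (u v : Fin m → ℝ) : ∑ j, (A.mulVec u) j * v j = ∑ j, u j * (A.mulVec v) j := by
  have hA : ∀ i j, A j i = A i j := fun i j => by
    conv_lhs => rw [← ha]
    simp [Matrix.conjTranspose_apply]
  simp only [Matrix.mulVec, dotProduct, Finset.sum_mul, Finset.mul_sum]
  rw [Finset.sum_comm]
  refine Finset.sum_congr rfl fun i _ => Finset.sum_congr rfl fun j _ => ?_
  rw [hA j i]; ring

lemma repr_mulVec {A : Matrix (Fin m) (Fin m) ℝ} (ha : A.IsHermitian)
    (x : Fin m → ℝ) (i : Fin m) :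
    ha.eigenvectorBasis.repr (eC (A.mulVec x)) i
      = ha.eigenvalues i * ha.eigenvectorBasis.repr (eC x) i := by
  have h3 := ha.mulVec_eigenvectorBasis i
  set w : Fin m → ℝ := (ha.eigenvectorBasis i).ofLp with hw
  have hb : eC w = ha.eigenvectorBasis i := (WithLp.equiv 2 _).symm_apply_apply _
  rw [OrthonormalBasis.repr_apply_apply, OrthonormalBasis.repr_apply_apply, ← hb,
    inner_eC, inner_eC, ← herm_symm_sum ha, h3, Finset.mul_sum]
  refine Finset.sum_congr rfl fun j _ => ?_
  simp [mul_assoc]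

lemma sum_sq_eigenvectorBasis {A : Matrix (Fin m) (Fin m) ℝ} (ha : A.IsHermitian) (i : Fin m) :
    ∑ j, ((WithLp.equiv 2 _) (ha.eigenvectorBasis i) j)^2 = 1 := by
  have h1 : ‖ha.eigenvectorBasis i‖ = 1 := ha.eigenvectorBasis.orthonormal.1 i
  set w : Fin m → ℝ := (WithLp.equiv 2 _) (ha.eigenvectorBasis i) with hw
  have hb : eC w = ha.eigenvectorBasis i := (WithLp.equiv 2 _).symm_apply_apply _
  rw [← hb, norm_eC] at h1
  have := congrArg (fun t : ℝ => t^2) h1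
  simpa [Real.sq_sqrt (Finset.sum_nonneg fun j _ => sq_nonneg (w j))] using this

lemma inner_euc (Z W : EuclideanSpace ℝ (Fin m)) : (inner ℝ Z W : ℝ) = ∑ i, Z i * W i := by
  rw [PiLp.inner_apply]; simp only [Real.inner_apply]

lemma norm_euc (Z : EuclideanSpace ℝ (Fin m)) : ‖Z‖ = Real.sqrt (∑ i, (Z i)^2) := by
  rw [EuclideanSpace.norm_eq]
  congr 1
  exact Finset.sum_congr rfl fun i _ => by rw [Real.norm_eq_abs, sq_abs]

lemma sum_sq_repr {A : Matrix (Fin m) (Fin m) ℝ} (ha : A.IsHermitian) (x : Fin m → ℝ) :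
    ∑ i, (ha.eigenvectorBasis.repr (eC x) i)^2 = ∑ i, (x i)^2 := by
  have h1 : ‖ha.eigenvectorBasis.repr (eC x)‖ = ‖eC x‖ := LinearIsometryEquiv.norm_map _ _
  rw [norm_euc, norm_eC] at h1
  have h2 := congrArg (fun t : ℝ => t^2) h1
  simp only at h2
  rwa [Real.sq_sqrt (Finset.sum_nonneg fun j _ => sq_nonneg _),
    Real.sq_sqrt (Finset.sum_nonneg fun j _ => sq_nonneg _)] at h2

lemma specNorm_le_of_eig {A : Matrix (Fin m) (Fin m) ℝ} (ha : A.IsHermitian) {k : ℝ}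
    (hk0 : 0 ≤ k) (hk : ∀ i, |ha.eigenvalues i| ≤ k) : specNorm A ≤ k := by
  refine specNorm_le fun x hx => ?_
  have h1 : Real.sqrt (∑ i, (A.mulVec x i) ^ 2)
      = Real.sqrt (∑ i, (ha.eigenvectorBasis.repr (eC (A.mulVec x)) i)^2) := by
    rw [sum_sq_repr]
  rw [h1]
  have h2 : ∑ i, (ha.eigenvectorBasis.repr (eC (A.mulVec x)) i)^2
      ≤ k^2 * ∑ i, (ha.eigenvectorBasis.repr (eC x) i)^2 := by
    rw [Finset.mul_sum]
    refine Finset.sum_le_sum fun i _ => ?_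
    rw [repr_mulVec ha, mul_pow]
    have : (ha.eigenvalues i)^2 ≤ k^2 := by
      rw [← sq_abs]
      exact pow_le_pow_left₀ (abs_nonneg _) (hk i) 2
    exact mul_le_mul_of_nonneg_right this (sq_nonneg _)
  refine (Real.sqrt_le_sqrt h2).trans ?_
  rw [Real.sqrt_mul (sq_nonneg k), Real.sqrt_sq hk0, sum_sq_repr]
  calc k * Real.sqrt (∑ i, (x i)^2) ≤ k * 1 :=
        mul_le_mul_of_nonneg_left (Real.sqrt_le_one.2 hx) hk0
    _ = k := mul_one k

lemma quad_ge_of_eig {A : Matrix (Fin m) (Fin m) ℝ} (ha : A.IsHermitian) {c : ℝ}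
    (h : ∀ i, c ≤ ha.eigenvalues i) (x : Fin m → ℝ) :
    c * ∑ i, (x i)^2 ≤ ∑ i, x i * (A.mulVec x) i := by
  have h1 : ∑ i, x i * (A.mulVec x) i = (inner ℝ (eC x) (eC (A.mulVec x)) : ℝ) :=
    (inner_eC _ _).symm
  have h2 : (inner ℝ (eC x) (eC (A.mulVec x)) : ℝ)
      = (inner ℝ (ha.eigenvectorBasis.repr (eC x)) (ha.eigenvectorBasis.repr (eC (A.mulVec x))) : ℝ) :=
    (LinearIsometryEquiv.inner_map_map _ _ _).symm
  rw [h1, h2, inner_euc]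
  have h3 : ∀ i, ha.eigenvectorBasis.repr (eC x) i * ha.eigenvectorBasis.repr (eC (A.mulVec x)) i
      = ha.eigenvalues i * (ha.eigenvectorBasis.repr (eC x) i)^2 := by
    intro i
    rw [repr_mulVec ha]
    ring
  rw [Finset.sum_congr rfl fun i _ => h3 i, ← sum_sq_repr ha x, Finset.mul_sum]
  exact Finset.sum_le_sum fun i _ => mul_le_mul_of_nonneg_right (h i) (sq_nonneg _)

lemma eig_ge_of_quad {A : Matrix (Fin m) (Fin m) ℝ} (ha : A.IsHermitian) {c : ℝ}
    (h : ∀ x : Fin m → ℝ, c * ∑ i, (x i)^2 ≤ ∑ i, x i * (A.mulVec x) i) (i : Fin m) :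
    c ≤ ha.eigenvalues i := by
  have h3 := ha.mulVec_eigenvectorBasis i
  set w : Fin m → ℝ := (ha.eigenvectorBasis i).ofLp with hw
  have hsum : ∑ j, (w j)^2 = 1 := sum_sq_eigenvectorBasis ha i
  have := h w
  rw [hsum, h3, mul_one] at this
  calc c ≤ ∑ j, w j * (ha.eigenvalues i • w) j := this
    _ = ha.eigenvalues i * ∑ j, (w j)^2 := by
        rw [Finset.mul_sum]
        exact Finset.sum_congr rfl fun j _ => by simp [mul_comm, sq]; ring
    _ = ha.eigenvalues i := by rw [hsum, mul_one]

end SpecAux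


namespace SpecAux

lemma sum_sq_pos {x : Fin m → ℝ} (hx : x ≠ 0) : 0 < ∑ i, (x i)^2 := by
  have : ∃ i, x i ≠ 0 := by
    by_contra h; push_neg at h; exact hx (funext h)
  obtain ⟨i, hi⟩ := this
  exact Finset.sum_pos' (fun j _ => sq_nonneg _) ⟨i, Finset.mem_univ i, by positivity⟩

lemma quad_abs_le (M : Matrix (Fin m) (Fin m) ℝ) (x : Fin m → ℝ) :
    |∑ i, x i * (M.mulVec x) i| ≤ specNorm M * ∑ i, (x i)^2 := by
  have h := Finset.sum_mul_sq_le_sq_mul_sq Finset.univ x (M.mulVec x)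
  have h2 : |∑ i, x i * (M.mulVec x) i|
      ≤ Real.sqrt (∑ i, (x i)^2) * Real.sqrt (∑ i, (M.mulVec x i)^2) := by
    rw [← Real.sqrt_mul (Finset.sum_nonneg fun j _ => sq_nonneg _), ← Real.sqrt_sq_eq_abs]
    exact Real.sqrt_le_sqrt h
  refine h2.trans ?_
  calc Real.sqrt (∑ i, (x i)^2) * Real.sqrt (∑ i, (M.mulVec x i)^2)
      ≤ Real.sqrt (∑ i, (x i)^2) * (specNorm M * Real.sqrt (∑ i, (x i)^2)) :=
        mul_le_mul_of_nonneg_left (sqrt_sum_sq_mulVec_le M x) (Real.sqrt_nonneg _)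
    _ = specNorm M * (Real.sqrt (∑ i, (x i)^2) * Real.sqrt (∑ i, (x i)^2)) := by ring
    _ = specNorm M * ∑ i, (x i)^2 := by
        rw [Real.mul_self_sqrt (Finset.sum_nonneg fun j _ => sq_nonneg _)]

lemma psd_quad_nonneg {M : Matrix (Fin m) (Fin m) ℝ} (hM : M.PosSemidef) (x : Fin m → ℝ) :
    0 ≤ ∑ i, x i * (M.mulVec x) i := by
  simpa [dotProduct] using hM.dotProduct_mulVec_nonneg x

lemma posDef_of_quad {M : Matrix (Fin m) (Fin m) ℝ} (hM : M.IsHermitian) {c : ℝ} (hc : 0 < c)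
    (hq : ∀ x : Fin m → ℝ, c * ∑ i, (x i)^2 ≤ ∑ i, x i * (M.mulVec x) i) : M.PosDef := by
  refine Matrix.PosDef.of_dotProduct_mulVec_pos hM fun x hx => ?_
  have h1 : (0:ℝ) < c * ∑ i, (x i)^2 := mul_pos hc (sum_sq_pos hx)
  have h2 := (h1.trans_le (hq x))
  simpa [dotProduct] using h2

lemma moorePenrose_of_isUnit {A : Matrix (Fin m) (Fin m) ℝ} (hA : IsUnit A.det)
    (hAh : A.IsHermitian) : moorePenrose A = A⁻¹ := by
  have hex : ∃ B : Matrix (Fin m) (Fin m) ℝ,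
      A * B * A = A ∧ B * A * B = B ∧ (A * B)ᵀ = A * B ∧ (B * A)ᵀ = B * A := by
    refine ⟨A⁻¹, ?_, ?_, ?_, ?_⟩
    · rw [Matrix.mul_nonsing_inv _ hA, one_mul]
    · rw [Matrix.nonsing_inv_mul _ hA, one_mul]
    · rw [Matrix.mul_nonsing_inv _ hA, Matrix.transpose_one]
    · rw [Matrix.nonsing_inv_mul _ hA, Matrix.transpose_one]
  rw [moorePenrose, dif_pos hex]
  obtain ⟨h1, -, -, -⟩ := hex.choose_spec
  have : A⁻¹ * (A * hex.choose * A) * A⁻¹ = A⁻¹ * A * A⁻¹ := by rw [h1]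
  calc hex.choose = 1 * hex.choose * 1 := by rw [one_mul, mul_one]
    _ = (A⁻¹ * A) * hex.choose * (A * A⁻¹) := by
        rw [Matrix.nonsing_inv_mul _ hA, Matrix.mul_nonsing_inv _ hA]
    _ = A⁻¹ * (A * hex.choose * A) * A⁻¹ := by noncomm_ring
    _ = A⁻¹ * A * A⁻¹ := this
    _ = A⁻¹ := by rw [Matrix.nonsing_inv_mul _ hA, one_mul]

end SpecAux

namespace SpecAux

lemma quad_of_eigvec {M : Matrix (Fin m) (Fin m) ℝ} {w : Fin m → ℝ} {t : ℝ}
    (h : M.mulVec w = t • w) : ∑ j, w j * (M.mulVec w) j = t * ∑ j, (w j)^2 := by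
  rw [h, Finset.mul_sum]
  exact Finset.sum_congr rfl fun j _ => by simp [sq]; ring

lemma sqrt_eig_ge {M : Matrix (Fin m) (Fin m) ℝ} (hM : M.PosSemidef) {c : ℝ} (hc : 0 ≤ c)
    (hq : ∀ x : Fin m → ℝ, c * ∑ i, (x i)^2 ≤ ∑ i, x i * (M.mulVec x) i) (i : Fin m) :
    Real.sqrt c ≤ (hM.posSemidef_sqrt.1).eigenvalues i := by
  set hS : (hM.sqrt).IsHermitian := hM.posSemidef_sqrt.1
  have h3 := hS.mulVec_eigenvectorBasis i
  set s : ℝ := hS.eigenvalues i with hs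
  set w : Fin m → ℝ := (hS.eigenvectorBasis i).ofLp with hw
  have hsum : ∑ j, (w j)^2 = 1 := sum_sq_eigenvectorBasis hS i
  have hMw : M.mulVec w = (s * s) • w := by
    rw [← hM.sqrt_mul_self, ← Matrix.mulVec_mulVec, h3, Matrix.mulVec_smul, h3,
      smul_smul]
  have hquad : ∑ j, w j * (M.mulVec w) j = s * s := by
    rw [quad_of_eigvec hMw, hsum, mul_one]
  have hs0 : 0 ≤ s := by
    have := psd_quad_nonneg hM.posSemidef_sqrt w
    rwa [quad_of_eigvec h3, hsum, mul_one] at this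
  have hcs : c ≤ s * s := by
    have := hq w
    rwa [hsum, mul_one, hquad] at this
  calc Real.sqrt c ≤ Real.sqrt (s * s) := Real.sqrt_le_sqrt hcs
    _ = s := Real.sqrt_mul_self hs0

lemma sqrt_quad_ge {M : Matrix (Fin m) (Fin m) ℝ} (hM : M.PosSemidef) {c : ℝ} (hc : 0 ≤ c)
    (hq : ∀ x : Fin m → ℝ, c * ∑ i, (x i)^2 ≤ ∑ i, x i * (M.mulVec x) i)
    (x : Fin m → ℝ) :
    Real.sqrt c * ∑ i, (x i)^2 ≤ ∑ i, x i * ((hM.sqrt).mulVec x) i :=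
  quad_ge_of_eig hM.posSemidef_sqrt.1 (sqrt_eig_ge hM hc hq) x

lemma inv_bound {S : Matrix (Fin m) (Fin m) ℝ} (hS : S.IsHermitian) {c : ℝ} (hc : 0 < c)
    (hq : ∀ x : Fin m → ℝ, c * ∑ i, (x i)^2 ≤ ∑ i, x i * (S.mulVec x) i) :
    IsUnit S.det ∧ specNorm S⁻¹ ≤ c⁻¹ := by
  have hpd : S.PosDef := posDef_of_quad hS hc hq
  have hdet : IsUnit S.det := isUnit_iff_ne_zero.2 hpd.det_pos.ne'
  refine ⟨hdet, ?_⟩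
  have hSinv : (S⁻¹).IsHermitian := hS.inv
  refine specNorm_le_of_eig hSinv (inv_nonneg.2 hc.le) fun i => ?_
  have h3 := hSinv.mulVec_eigenvectorBasis i
  set t : ℝ := hSinv.eigenvalues i with hts
  set w : Fin m → ℝ := (hSinv.eigenvectorBasis i).ofLp with hw
  have hsum : ∑ j, (w j)^2 = 1 := sum_sq_eigenvectorBasis hSinv i
  have hw0 : w ≠ 0 := by
    intro h
    rw [h] at hsum
    simp at hsum
  have hSw : t • (S.mulVec w) = w := by
    have h4 : S.mulVec (S⁻¹.mulVec w) = w := by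
      rw [Matrix.mulVec_mulVec, Matrix.mul_nonsing_inv _ hdet, Matrix.one_mulVec]
    rw [h3, Matrix.mulVec_smul] at h4
    exact h4
  have ht0 : t ≠ 0 := by
    intro h
    rw [h, zero_smul] at hSw
    exact hw0 hSw.symm
  have hSwe : S.mulVec w = t⁻¹ • w := by
    have := congrArg (fun v => t⁻¹ • v) hSw
    simpa [smul_smul, inv_mul_cancel₀ ht0] using this.symm.symm
  have hct : c ≤ t⁻¹ := by
    have := hq w
    rwa [hsum, mul_one, quad_of_eigvec hSwe, hsum, mul_one] at this
  have htpos : 0 < t := by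
    have h5 : 0 < t⁻¹ := hc.trans_le hct
    exact inv_pos.1 (by simpa using h5)
  have : t ≤ c⁻¹ := by
    have h6 := inv_anti₀ hc hct
    rwa [inv_inv] at h6
  rw [abs_of_pos htpos]
  exact this

end SpecAux

namespace SpecAux

lemma sqrt_diff_bound {A B : Matrix (Fin m) (Fin m) ℝ} (hA : A.PosSemidef) (hB : B.PosSemidef)
    {c : ℝ} (hc : 0 < c)
    (hq : ∀ x : Fin m → ℝ, c * ∑ i, (x i)^2 ≤ ∑ i, x i * (A.mulVec x) i) :
    specNorm (hA.sqrt - hB.sqrt) ≤ (Real.sqrt c)⁻¹ * specNorm (A - B) := by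
  have hcs : 0 < Real.sqrt c := Real.sqrt_pos.2 hc
  set X : Matrix (Fin m) (Fin m) ℝ := hA.sqrt - hB.sqrt with hXdef
  have hX : X.IsHermitian := (hA.posSemidef_sqrt.1).sub (hB.posSemidef_sqrt.1)
  refine specNorm_le_of_eig hX (mul_nonneg (by positivity) (specNorm_nonneg _)) fun i => ?_
  have h3 := hX.mulVec_eigenvectorBasis i
  set t : ℝ := hX.eigenvalues i with hts
  set w : Fin m → ℝ := (hX.eigenvectorBasis i).ofLp with hw
  have hsum : ∑ j, (w j)^2 = 1 := sum_sq_eigenvectorBasis hX i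
  have hid : hA.sqrt * X + X * hB.sqrt = A - B := by
    rw [hXdef, Matrix.mul_sub, Matrix.sub_mul, hA.sqrt_mul_self, hB.sqrt_mul_self]
    noncomm_ring
  have hterm1 : ∑ j, w j * ((hA.sqrt * X).mulVec w) j
      = t * ∑ j, w j * ((hA.sqrt).mulVec w) j := by
    rw [← Matrix.mulVec_mulVec, h3, Matrix.mulVec_smul, Finset.mul_sum]
    exact Finset.sum_congr rfl fun j _ => by simp; ring
  have hterm2 : ∑ j, w j * ((X * hB.sqrt).mulVec w) j
      = t * ∑ j, w j * ((hB.sqrt).mulVec w) j := by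
    rw [← Matrix.mulVec_mulVec, ← herm_symm_sum hX, h3, Finset.mul_sum]
    exact Finset.sum_congr rfl fun j _ => by simp; ring
  have hsumid : ∑ j, w j * ((A - B).mulVec w) j
      = t * (∑ j, w j * ((hA.sqrt).mulVec w) j + ∑ j, w j * ((hB.sqrt).mulVec w) j) := by
    rw [← hid, Matrix.add_mulVec]
    rw [mul_add]
    rw [← hterm1, ← hterm2, ← Finset.sum_add_distrib]
    exact Finset.sum_congr rfl fun j _ => by simp [mul_add]
  set qA := ∑ j, w j * ((hA.sqrt).mulVec w) j with hqA
  set qB := ∑ j, w j * ((hB.sqrt).mulVec w) j with hqB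
  have hqAge : Real.sqrt c ≤ qA := by
    have := sqrt_quad_ge hA hc.le hq w
    rwa [hsum, mul_one] at this
  have hqBge : 0 ≤ qB := psd_quad_nonneg hB.posSemidef_sqrt w
  have habs : |t| * Real.sqrt c ≤ specNorm (A - B) := by
    have h5 : |t| * Real.sqrt c ≤ |t| * (qA + qB) := by
      refine mul_le_mul_of_nonneg_left ?_ (abs_nonneg t)
      linarith
    refine h5.trans ?_
    have h6 : |t| * (qA + qB) = |t * (qA + qB)| := by
      rw [abs_mul, abs_of_nonneg (by linarith : (0:ℝ) ≤ qA + qB)]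
    rw [h6, ← hsumid]
    have h7 := quad_abs_le (A - B) w
    rwa [hsum, mul_one] at h7
  calc |t| = (Real.sqrt c)⁻¹ * (|t| * Real.sqrt c) := by field_simp
    _ ≤ (Real.sqrt c)⁻¹ * specNorm (A - B) :=
        mul_le_mul_of_nonneg_left habs (by positivity)

end SpecAux


namespace SpecAux

lemma invSqrt_eq {A : Matrix (Fin m) (Fin m) ℝ} (hA : A.PosSemidef)
    (hdet : IsUnit (hA.sqrt).det) : invSqrt A = (hA.sqrt)⁻¹ := by
  rw [invSqrt, show psdSqrt A = hA.sqrt from dif_pos hA,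
    moorePenrose_of_isUnit hdet hA.posSemidef_sqrt.1]

lemma key {A B : Matrix (Fin m) (Fin m) ℝ} {c : ℝ} (hc : 0 < c)
    (hA : A.PosSemidef) (hB : B.PosSemidef)
    (hAq : ∀ x : Fin m → ℝ, c * ∑ i, (x i)^2 ≤ ∑ i, x i * (A.mulVec x) i)
    (hclose : specNorm (B - A) ≤ c/2) :
    B.det ≠ 0 ∧ specNorm (invSqrt B - invSqrt A)
      ≤ ((Real.sqrt (c/2))⁻¹ * (Real.sqrt c)⁻¹ * (Real.sqrt c)⁻¹) * specNorm (B - A) := by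
  have hBq : ∀ x : Fin m → ℝ, (c/2) * ∑ i, (x i)^2 ≤ ∑ i, x i * (B.mulVec x) i := by
    intro x
    have hBsplit : B.mulVec x = A.mulVec x + (B - A).mulVec x := by
      rw [← Matrix.add_mulVec, add_sub_cancel]
    have h1 : ∑ i, x i * (B.mulVec x) i
        = ∑ i, x i * (A.mulVec x) i + ∑ i, x i * ((B - A).mulVec x) i := by
      rw [← Finset.sum_add_distrib]
      exact Finset.sum_congr rfl fun i _ => by rw [hBsplit]; simp [mul_add]
    have h2 : |∑ i, x i * ((B - A).mulVec x) i| ≤ (c/2) * ∑ i, (x i)^2 := by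
      refine (quad_abs_le _ _).trans ?_
      exact mul_le_mul_of_nonneg_right hclose (Finset.sum_nonneg fun j _ => sq_nonneg _)
    have h3 := hAq x
    have h4 := abs_le.1 h2
    rw [h1]
    nlinarith [h3, h4.1]
  have hBpd : B.PosDef := posDef_of_quad hB.1 (half_pos hc) hBq
  have hAsq := sqrt_quad_ge hA hc.le hAq
  have hBsq := sqrt_quad_ge hB (half_pos hc).le hBq
  obtain ⟨hAdet, hAinv⟩ := inv_bound hA.posSemidef_sqrt.1 (Real.sqrt_pos.2 hc) hAsq
  obtain ⟨hBdet, hBinv⟩ := inv_bound hB.posSemidef_sqrt.1 (Real.sqrt_pos.2 (half_pos hc)) hBsq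
  refine ⟨hBpd.det_pos.ne', ?_⟩
  rw [invSqrt_eq hA hAdet, invSqrt_eq hB hBdet]
  have hident : (hB.sqrt)⁻¹ - (hA.sqrt)⁻¹ = (hB.sqrt)⁻¹ * (hA.sqrt - hB.sqrt) * (hA.sqrt)⁻¹ := by
    rw [Matrix.mul_sub, Matrix.sub_mul]
    rw [Matrix.nonsing_inv_mul _ hBdet]
    rw [Matrix.mul_assoc, Matrix.mul_nonsing_inv _ hAdet, Matrix.mul_one, Matrix.one_mul]
  rw [hident]
  have hXb : specNorm (hA.sqrt - hB.sqrt) ≤ (Real.sqrt c)⁻¹ * specNorm (A - B) :=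
    sqrt_diff_bound hA hB hc hAq
  have hAB : specNorm (A - B) = specNorm (B - A) := by
    rw [show A - B = -(B - A) by abel, specNorm_neg]
  have step1 : specNorm ((hB.sqrt)⁻¹ * (hA.sqrt - hB.sqrt) * (hA.sqrt)⁻¹)
      ≤ specNorm ((hB.sqrt)⁻¹) * specNorm (hA.sqrt - hB.sqrt) * specNorm ((hA.sqrt)⁻¹) := by
    refine (specNorm_mul_le _ _).trans ?_
    exact mul_le_mul_of_nonneg_right (specNorm_mul_le _ _) (specNorm_nonneg _)
  refine step1.trans ?_
  have h0a : (0:ℝ) ≤ (Real.sqrt (c/2))⁻¹ := by positivity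
  have h0c : (0:ℝ) ≤ (Real.sqrt c)⁻¹ := by positivity
  calc specNorm ((hB.sqrt)⁻¹) * specNorm (hA.sqrt - hB.sqrt) * specNorm ((hA.sqrt)⁻¹)
      ≤ (Real.sqrt (c/2))⁻¹ * ((Real.sqrt c)⁻¹ * specNorm (A - B)) * (Real.sqrt c)⁻¹ := by
        refine mul_le_mul ?_ hAinv (specNorm_nonneg _)
          (mul_nonneg h0a (mul_nonneg h0c (specNorm_nonneg _)))
        exact mul_le_mul hBinv (hXb) (specNorm_nonneg _) h0a
    _ = ((Real.sqrt (c/2))⁻¹ * (Real.sqrt c)⁻¹ * (Real.sqrt c)⁻¹) * specNorm (B - A) := by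
        rw [hAB]; ring

end SpecAux


end SpecAuxLemmas

theorem invSqrt_estimation_error {Ω : Type*} [MeasurableSpace Ω] (P : Measure Ω)
    [IsProbabilityMeasure P]
    (m : ℕ → ℕ) (SigM : (n : ℕ) → Matrix (Fin (m n)) (Fin (m n)) ℝ)
    (SigH : (n : ℕ) → Ω → Matrix (Fin (m n)) (Fin (m n)) ℝ)
    (hpd : ∀ n, (SigM n).PosDef)
    (heig : ∃ c₁ c₂ : ℝ, 0 < c₁ ∧ ∀ n (x : Fin (m n) → ℝ),
        c₁ * (∑ i, (x i) ^ 2) ≤ dotProduct x ((SigM n).mulVec x) ∧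
        dotProduct x ((SigM n).mulVec x) ≤ c₂ * (∑ i, (x i) ^ 2))
    (hpsd : ∀ n ω, (SigH n ω).PosSemidef)
    (a : ℕ → ℝ) (hapos : ∀ n, 0 < a n) (ha0 : Tendsto a atTop (nhds 0))
    (hOP : IsBigOP P (fun n ω => specNorm (SigH n ω - SigM n)) a) :
    ∀ δ : ℝ, 0 < δ → ∃ M : ℝ, 0 < M ∧
      Filter.limsup (fun n =>
          (P {ω | (SigH n ω).det = 0 ∨
            M * a n < specNorm (invSqrt (SigH n ω) - invSqrt (SigM n))}).toReal)
        atTop ≤ δ := by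
  intro δ hδ
  obtain ⟨c₁, c₂, hc₁, heigs⟩ := heig
  obtain ⟨M₀, hM₀, hls⟩ := hOP δ hδ
  set K : ℝ := (Real.sqrt (c₁/2))⁻¹ * (Real.sqrt c₁)⁻¹ * (Real.sqrt c₁)⁻¹ with hK
  have hKpos : 0 < K := by
    have h1 : 0 < Real.sqrt (c₁/2) := Real.sqrt_pos.2 (by linarith)
    have h2 : 0 < Real.sqrt c₁ := Real.sqrt_pos.2 hc₁
    positivity
  refine ⟨K * M₀ + 1, by positivity, ?_⟩
  set M : ℝ := K * M₀ + 1 with hM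
  have hev : ∀ᶠ n in atTop, a n < c₁ / (2 * M₀) :=
    ha0.eventually (gt_mem_nhds (by positivity))
  have hmono : ∀ᶠ n in atTop,
      (P {ω | (SigH n ω).det = 0 ∨
        M * a n < specNorm (invSqrt (SigH n ω) - invSqrt (SigM n))}).toReal
      ≤ (P {ω | M₀ * a n < |specNorm (SigH n ω - SigM n)|}).toReal := by
    filter_upwards [hev] with n hn
    have hsub : {ω | (SigH n ω).det = 0 ∨
        M * a n < specNorm (invSqrt (SigH n ω) - invSqrt (SigM n))}
        ⊆ {ω | M₀ * a n < |specNorm (SigH n ω - SigM n)|} := by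
      intro ω hω
      by_contra hF
      simp only [Set.mem_setOf_eq, not_lt] at hF
      have hspec : specNorm (SigH n ω - SigM n) ≤ M₀ * a n :=
        (le_abs_self _).trans hF
      have hclose : specNorm (SigH n ω - SigM n) ≤ c₁ / 2 := by
        refine hspec.trans ?_
        have h8 : M₀ * a n ≤ M₀ * (c₁ / (2 * M₀)) := mul_le_mul_of_nonneg_left hn.le hM₀.le
        have h9 : M₀ * (c₁ / (2 * M₀)) = c₁ / 2 := by
          field_simp
        linarith
      have hAq : ∀ x : Fin (m n) → ℝ,
          c₁ * ∑ i, (x i)^2 ≤ ∑ i, x i * ((SigM n).mulVec x) i := by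
        intro x
        simpa [dotProduct] using (heigs n x).1
      obtain ⟨hdet, hbound⟩ := SpecAux.key hc₁ (hpd n).posSemidef (hpsd n ω) hAq hclose
      rcases hω with hω | hω
      · exact hdet hω
      · have hle : specNorm (invSqrt (SigH n ω) - invSqrt (SigM n)) ≤ K * (M₀ * a n) := by
          refine hbound.trans ?_
          exact mul_le_mul_of_nonneg_left hspec hKpos.le
        have : M * a n < K * (M₀ * a n) := hω.trans_le hle
        rw [hM] at this
        nlinarith [hapos n]
    have hPle : P {ω | (SigH n ω).det = 0 ∨
        M * a n < specNorm (invSqrt (SigH n ω) - invSqrt (SigM n))}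
        ≤ P {ω | M₀ * a n < |specNorm (SigH n ω - SigM n)|} := measure_mono hsub
    exact ENNReal.toReal_mono (measure_ne_top _ _) hPle
  refine le_trans (Filter.limsup_le_limsup hmono ?_ ?_) hls
  · refine Filter.IsBoundedUnder.isCoboundedUnder_le ⟨0, ?_⟩
    exact Filter.eventually_map.2 (Filter.Eventually.of_forall fun n => ENNReal.toReal_nonneg)
  · refine ⟨1, Filter.eventually_map.2 (Filter.Eventually.of_forall fun n => ?_)⟩
    have := prob_le_one (μ := P) (s := {ω | M₀ * a n < |specNorm (SigH n ω - SigM n)|})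
    calc (P _).toReal ≤ (1 : ENNReal).toReal := ENNReal.toReal_mono ENNReal.one_ne_top this
      _ = 1 := ENNReal.toReal_one


end
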